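/- Let M be an n×n negative definite real matrix, let D be an n×n diagonal real matrix with strictly positive diagonal entries, let κ ≥ 0 and c > 0 be real constants, and set A = c·D·(M + κ·Mᵀ). Then I − A is invertible and every eigenvalue μ ∈ ℂ of (I − A)⁻¹·(I + A), regarded as a complex matrix, satisfies |μ| < 1; in particular the spectral radius of (I − A)⁻¹·(I + A) is strictly less than 1. (This is the unconditional stability of the one-dimensional Crank–Nicolson WSLD scheme, where c = τ/(2h^α), D = D₊ is the diagonal matrix of variable coefficients, and M is the fourth-order WSLD matrix.) -/

import Mathlib

open Matrix

/-- A real square matrix `M` is negative definite if `xᵀ M x < 0` for every nonzero `x`. -/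
def NegDef {n : ℕ} (M : Matrix (Fin n) (Fin n) ℝ) : Prop :=
  ∀ x : Fin n → ℝ, x ≠ 0 → x ⬝ᵥ M.mulVec x < 0

lemma quad_re {n : ℕ} (B : Matrix (Fin n) (Fin n) ℝ) (v : Fin n → ℂ) :
    (star v ⬝ᵥ (B.map Complex.ofReal).mulVec v).re =
      (fun i => (v i).re) ⬝ᵥ B.mulVec (fun i => (v i).re) +
      (fun i => (v i).im) ⬝ᵥ B.mulVec (fun i => (v i).im) := by
  simp only [dotProduct, mulVec, Matrix.map_apply, Pi.star_apply, Complex.re_sum,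
    Finset.mul_sum, ← Finset.sum_add_distrib]
  refine Finset.sum_congr rfl fun i _ => Finset.sum_congr rfl fun j _ => ?_
  simp only [Complex.mul_re, Complex.mul_im, Complex.ofReal_re, Complex.ofReal_im, RCLike.star_def,
    Complex.conj_re, Complex.conj_im]
  ring

lemma key {n : ℕ} (B : Matrix (Fin n) (Fin n) ℝ)
    (hB : ∀ x : Fin n → ℝ, x ≠ 0 → x ⬝ᵥ B.mulVec x < 0)
    (d : Fin n → ℝ) (hd : ∀ i, 0 < d i) (μ : ℂ) (v : Fin n → ℂ) (hv : v ≠ 0)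
    (h : ((Matrix.diagonal d * B).map Complex.ofReal).mulVec v = μ • v) : μ.re < 0 := by
  classical
  set Bc := B.map (Complex.ofReal) with hBc
  have hmap : (Matrix.diagonal d * B).map Complex.ofReal
      = Matrix.diagonal (fun i => (d i : ℂ)) * Bc := by
    rw [show Complex.ofReal = ⇑Complex.ofRealHom from rfl, Matrix.map_mul]
    congr 1
    exact Matrix.diagonal_map (by simp)
  rw [hmap, ← Matrix.mulVec_mulVec] at h
  have hcomp : ∀ i, Bc.mulVec v i = (d i : ℂ)⁻¹ * (μ * v i) := by
    intro i
    have h1 : (d i : ℂ) * Bc.mulVec v i = μ * v i := by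
      simpa [Matrix.mulVec_diagonal] using congrFun h i
    have hdi : (d i : ℂ) ≠ 0 := by exact_mod_cast (hd i).ne'
    field_simp
    rw [mul_comm]
    exact h1
  set p : ℝ := ∑ i, Complex.normSq (v i) / d i with hp
  have hq : star v ⬝ᵥ Bc.mulVec v = μ * (p : ℂ) := by
    simp only [dotProduct, Pi.star_apply]
    rw [hp]
    push_cast
    rw [Finset.mul_sum]
    refine Finset.sum_congr rfl fun i _ => ?_
    rw [hcomp i, Complex.normSq_eq_conj_mul_self]
    have hdi : (d i : ℂ) ≠ 0 := by exact_mod_cast (hd i).ne'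
    field_simp
    simp only [RCLike.star_def]
    ring
  have hppos : 0 < p := by
    obtain ⟨i₀, hi₀⟩ := Function.ne_iff.mp hv
    refine Finset.sum_pos' (fun i _ => div_nonneg (Complex.normSq_nonneg _) (hd i).le) ?_
    exact ⟨i₀, Finset.mem_univ _, div_pos (Complex.normSq_pos.mpr hi₀) (hd i₀)⟩
  -- compute real part two ways
  have hre : (star v ⬝ᵥ Bc.mulVec v).re = μ.re * p := by
    rw [hq]
    simp [Complex.mul_re]
  set u : Fin n → ℝ := fun i => (v i).re with hu
  set w : Fin n → ℝ := fun i => (v i).im with hw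
  have hre2 : (star v ⬝ᵥ Bc.mulVec v).re = u ⬝ᵥ B.mulVec u + w ⬝ᵥ B.mulVec w := quad_re B v
  have huw : u ≠ 0 ∨ w ≠ 0 := by
    by_contra hc
    push_neg at hc
    apply hv
    funext i
    have h1 := congrFun hc.1 i
    have h2 := congrFun hc.2 i
    simp only [hu, hw, Pi.zero_apply] at h1 h2
    exact Complex.ext h1 h2
  have hneg : u ⬝ᵥ B.mulVec u + w ⬝ᵥ B.mulVec w < 0 := by
    have h1 : u ⬝ᵥ B.mulVec u ≤ 0 := by
      by_cases hu0 : u = 0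
      · simp [hu0]
      · exact (hB u hu0).le
    have h2 : w ⬝ᵥ B.mulVec w ≤ 0 := by
      by_cases hw0 : w = 0
      · simp [hw0]
      · exact (hB w hw0).le
    rcases huw with h' | h'
    · linarith [hB u h']
    · linarith [hB w h']
  rw [hre2] at hre
  nlinarith

/-- Unconditional stability of the 1D Crank–Nicolson WSLD scheme: with
`A = c D (M + κ Mᵀ)`, the matrix `I - A` is invertible and every eigenvalue of
`(I - A)⁻¹ (I + A)` has modulus `< 1`; in particular its spectral radius is `< 1`. -/
theorem stmt18 {n : ℕ} (M : Matrix (Fin n) (Fin n) ℝ) (hM : NegDef M)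
    (d : Fin n → ℝ) (hd : ∀ i, 0 < d i) (κ : ℝ) (hκ : 0 ≤ κ) (c : ℝ) (hc : 0 < c)
    (A : Matrix (Fin n) (Fin n) ℝ)
    (hA : A = c • (Matrix.diagonal d * (M + κ • Mᵀ))) :
    IsUnit (1 - A) ∧
    (∀ μ ∈ spectrum ℂ (((1 - A)⁻¹ * (1 + A)).map Complex.ofReal), ‖μ‖ < 1) ∧
    spectralRadius ℂ (((1 - A)⁻¹ * (1 + A)).map Complex.ofReal) < 1 := by
  classical
  set B : Matrix (Fin n) (Fin n) ℝ := c • (M + κ • Mᵀ) with hBdef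
  have hA2 : A = Matrix.diagonal d * B := by
    rw [hA, hBdef, Matrix.mul_smul]
  have hB : ∀ x : Fin n → ℝ, x ≠ 0 → x ⬝ᵥ B.mulVec x < 0 := by
    intro x hx
    have ht : x ⬝ᵥ Mᵀ.mulVec x = x ⬝ᵥ M.mulVec x := by
      rw [Matrix.mulVec_transpose, dotProduct_comm, ← Matrix.dotProduct_mulVec]
    have hMx := hM x hx
    have hexp : x ⬝ᵥ B.mulVec x = c * ((1 + κ) * (x ⬝ᵥ M.mulVec x)) := by
      simp only [hBdef, Matrix.smul_mulVec, Matrix.add_mulVec, Matrix.smul_mulVec,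
        dotProduct_smul, dotProduct_add, smul_eq_mul, ht]
      ring
    rw [hexp, ← mul_assoc]
    exact mul_neg_of_pos_of_neg (mul_pos hc (by linarith)) hMx
  set F : Matrix (Fin n) (Fin n) ℝ →+* Matrix (Fin n) (Fin n) ℂ :=
    (Complex.ofRealHom).mapMatrix with hF
  have hFA : ∀ X : Matrix (Fin n) (Fin n) ℝ, X.map Complex.ofReal = F X := fun X => rfl
  set Ac := A.map Complex.ofReal with hAc
  have hA2map : Ac = (Matrix.diagonal d * B).map Complex.ofReal := by rw [hAc, hA2]
  -- part (a)
  have hIA : IsUnit (1 - A) := by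
    by_contra hcon
    have hdet : (1 - A).det = 0 := by
      by_contra hd0
      exact hcon ((Matrix.isUnit_iff_isUnit_det _).mpr (isUnit_iff_ne_zero.mpr hd0))
    have hdetC : ((1 - A).map Complex.ofReal).det = 0 := by
      rw [hFA, hF, ← RingHom.map_det, hdet, map_zero]
    obtain ⟨v, hv0, hveq⟩ := Matrix.exists_mulVec_eq_zero_iff.mpr hdetC
    have hmap1 : (1 - A).map Complex.ofReal = 1 - Ac := by
      rw [hFA, map_sub, _root_.map_one, hAc, hFA]
    rw [hmap1, Matrix.sub_mulVec, Matrix.one_mulVec, sub_eq_zero] at hveq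
    have h1 : Ac.mulVec v = (1 : ℂ) • v := by rw [← hveq, one_smul]
    have := key B hB d hd 1 v hv0 (by rw [← hA2map]; exact h1)
    norm_num at this
  have hdetIA : IsUnit (1 - A).det := (Matrix.isUnit_iff_isUnit_det _).mp hIA
  have hinv : (1 - A) * (1 - A)⁻¹ = 1 := Matrix.mul_nonsing_inv _ hdetIA
  have e1 : (1 - A) * ((1 - A)⁻¹ * (1 + A)) = 1 + A := by
    rw [← mul_assoc, hinv, one_mul]
  have hmulT : (1 - Ac) * (((1 - A)⁻¹ * (1 + A)).map Complex.ofReal) = 1 + Ac := by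
    rw [hFA, hAc, hFA, show (1 : Matrix (Fin n) (Fin n) ℂ) = F 1 from (_root_.map_one F).symm,
      ← map_sub, ← _root_.map_mul, e1, map_add]
  have hkey : ∀ μ ∈ spectrum ℂ (((1 - A)⁻¹ * (1 + A)).map Complex.ofReal),
      ‖μ‖ < 1 := by
    intro μ hμ
    rw [spectrum.mem_iff] at hμ
    have hdet0 : (algebraMap ℂ (Matrix (Fin n) (Fin n) ℂ) μ -
        ((1 - A)⁻¹ * (1 + A)).map Complex.ofReal).det = 0 := by
      by_contra h0
      exact hμ ((Matrix.isUnit_iff_isUnit_det _).mpr (isUnit_iff_ne_zero.mpr h0))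
    obtain ⟨v, hv0, hveq⟩ := Matrix.exists_mulVec_eq_zero_iff.mpr hdet0
    have hTv : (((1 - A)⁻¹ * (1 + A)).map Complex.ofReal).mulVec v = μ • v := by
      rw [Algebra.algebraMap_eq_smul_one, Matrix.sub_mulVec, Matrix.smul_mulVec,
        Matrix.one_mulVec, sub_eq_zero] at hveq
      exact hveq.symm
    have h2 : (1 + Ac).mulVec v = μ • ((1 - Ac).mulVec v) := by
      rw [← hmulT, ← Matrix.mulVec_mulVec, hTv, Matrix.mulVec_smul]
    rw [Matrix.add_mulVec, Matrix.one_mulVec, Matrix.sub_mulVec, Matrix.one_mulVec,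
      smul_sub] at h2
    have h3 : (1 + μ) • Ac.mulVec v = (μ - 1) • v := by
      linear_combination (norm := module) h2
    by_cases hμ1 : μ = -1
    · exfalso
      apply hv0
      rw [hμ1] at h3
      have h4 : ((-1 : ℂ) - 1) • v = 0 := by rw [← h3]; norm_num
      rcases smul_eq_zero.mp h4 with h | h
      · norm_num at h
      · exact h
    · have hne : (1 + μ) ≠ 0 := fun hc' => hμ1 (by linear_combination hc')
      have heig : Ac.mulVec v = ((μ - 1) / (μ + 1)) • v := by
        apply smul_right_injective (Fin n → ℂ) hne
        show (1 + μ) • Ac.mulVec v = (1 + μ) • (((μ - 1) / (μ + 1)) • v)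
        rw [h3, smul_smul]
        congr 1
        rw [mul_comm, div_mul_eq_mul_div, add_comm μ 1, mul_div_cancel_right₀ _ hne]
      have hre := key B hB d hd _ v hv0 (by rw [← hA2map]; exact heig)
      have hw0 : (μ + 1) ≠ 0 := fun hc' => hμ1 (by linear_combination hc')
      have hN : 0 < Complex.normSq (μ + 1) := Complex.normSq_pos.mpr hw0
      rw [Complex.div_re] at hre
      have hnum : Complex.normSq μ < 1 := by
        rw [← add_div, div_neg_iff] at hre
        rcases hre with ⟨h5, h6⟩ | ⟨h5, h6⟩
        · linarith
        · simp only [Complex.sub_re, Complex.add_re, Complex.one_re, Complex.sub_im,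
            Complex.add_im, Complex.one_im, Complex.normSq_apply] at h5 ⊢
          nlinarith
      nlinarith [Complex.sq_norm μ, norm_nonneg μ, hnum]
  refine ⟨hIA, hkey, ?_⟩
  rcases (spectrum ℂ (((1 - A)⁻¹ * (1 + A)).map Complex.ofReal)).eq_empty_or_nonempty
    with he | hne
  · rw [spectralRadius, he]
    simp
  · obtain ⟨k₀, hk₀S, hk₀max⟩ :=
      Set.exists_max_image _ (fun k => ‖k‖₊) (Matrix.finite_spectrum _) hne
    have hle : spectralRadius ℂ (((1 - A)⁻¹ * (1 + A)).map Complex.ofReal)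
        ≤ (‖k₀‖₊ : ENNReal) := by
      rw [spectralRadius]
      exact iSup₂_le fun k hk => ENNReal.coe_le_coe.mpr (hk₀max k hk)
    refine lt_of_le_of_lt hle ?_
    rw [← ENNReal.coe_one, ENNReal.coe_lt_coe, ← NNReal.coe_lt_coe]
    simpa [coe_nnnorm] using hkey k₀ hk₀S
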